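/- In the product poset L(k₁,…,kₙ), the sequence of rank sizes |L_i| is symmetric: |L_i| = |L_{N-i}| where N = ∑_{j=1}^n (k_j - 1), and it is non-decreasing for i ≤ ⌊N/2⌋. -/

import Mathlib

/-- A sequence `f : ℤ → ℕ` supported on `[0,∞)`, symmetric about `N/2`,
and nondecreasing up to `N/2`. -/
def GoodSeq (N : ℕ) (f : ℤ → ℕ) : Prop :=
  (∀ i : ℤ, f i = f (N - i)) ∧
  (∀ i j : ℤ, i ≤ j → 2 * j ≤ (N : ℤ) → f i ≤ f j) ∧
  (∀ i : ℤ, i < 0 → f i = 0)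

lemma goodSeq_mono_of_step {g : ℤ → ℕ} {M : ℤ}
    (h : ∀ i : ℤ, 2 * (i + 1) ≤ M → g i ≤ g (i + 1)) :
    ∀ i j : ℤ, i ≤ j → 2 * j ≤ M → g i ≤ g j := by
  intro i j hij hj
  obtain ⟨d, rfl⟩ := Int.le.dest hij
  clear hij
  induction d with
  | zero => simp
  | succ d ihd =>
      have e : i + ((d + 1 : ℕ) : ℤ) = (i + d) + 1 := by push_cast; ring
      rw [e] at hj ⊢
      exact le_trans (ihd (by omega)) (h (i + d) hj)

lemma goodSeq_conv {N : ℕ} {f : ℤ → ℕ} (hf : GoodSeq N f) (k : ℕ) (hk : 1 ≤ k) :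
    GoodSeq (N + (k - 1)) (fun m => ∑ t ∈ Finset.range k, f (m - t)) := by
  obtain ⟨hsym, hmono, hzero⟩ := hf
  obtain ⟨m, rfl⟩ : ∃ m, k = m + 1 := ⟨k - 1, by omega⟩
  have hN' : (N + (m + 1 - 1) : ℕ) = N + m := by omega
  rw [hN']
  refine ⟨?_, ?_, ?_⟩
  · -- symmetry
    intro i
    show (∑ t ∈ Finset.range (m + 1), f (i - t)) =
      ∑ t ∈ Finset.range (m + 1), f (((N + m : ℕ) : ℤ) - i - t)
    have h1 : ∀ t ∈ Finset.range (m + 1),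
        f (((N + m : ℕ) : ℤ) - i - t) = f (i + t - m) := by
      intro t ht
      rw [hsym (i + t - m)]; congr 1; push_cast; ring
    calc ∑ t ∈ Finset.range (m + 1), f (i - t)
        = ∑ t ∈ Finset.range (m + 1), f (i + ((m - t : ℕ) : ℤ) - m) := by
          refine Finset.sum_congr rfl fun t ht => ?_
          have ht' : t ≤ m := by simp only [Finset.mem_range] at ht; omega
          have hc : ((m - t : ℕ) : ℤ) = (m : ℤ) - t := by omega
          rw [hc]; congr 1; ring
      _ = ∑ t ∈ Finset.range (m + 1), f (i + t - m) := by
          have := Finset.sum_range_reflect (fun t => f (i + t - m)) (m + 1)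
          simpa using this
      _ = ∑ t ∈ Finset.range (m + 1), f (((N + m : ℕ) : ℤ) - i - t) :=
          (Finset.sum_congr rfl h1).symm
  · -- monotone
    have key : ∀ i : ℤ, 2 * (i + 1) ≤ (N : ℤ) + m →
        (∑ t ∈ Finset.range (m + 1), f (i - t)) ≤
          ∑ t ∈ Finset.range (m + 1), f (i + 1 - t) := by
      intro i hi
      rw [Finset.sum_range_succ, Finset.sum_range_succ']
      have h1 : ∀ t ∈ Finset.range m, f (i + 1 - ((t : ℕ) + 1 : ℕ)) = f (i - t) := by
        intro t _; congr 1; push_cast; ring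
      rw [Finset.sum_congr rfl h1]
      have h2 : f (i - m) ≤ f (i + 1) := by
        by_cases h : 2 * (i + 1) ≤ (N : ℤ)
        · exact hmono _ _ (by omega) h
        · rw [hsym (i + 1)]
          exact hmono _ _ (by omega) (by omega)
      have h3 : f (i + 1 - ((0 : ℕ) : ℤ)) = f (i + 1) := by norm_num
      rw [h3]
      exact add_le_add (le_refl _) h2
    intro i j hij hj
    exact goodSeq_mono_of_step (M := (N : ℤ) + m) key i j hij (by omega)
  · intro i hi
    exact Finset.sum_eq_zero fun t _ => hzero _ (by omega)

def cnt (n : ℕ) (k : Fin n → ℕ) : ℤ → ℕ := fun m =>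
  (Finset.univ.filter (fun x : ∀ i, Fin (k i) => ((∑ j, (x j : ℕ) : ℕ) : ℤ) = m)).card

lemma cnt_rec (n : ℕ) (k : Fin (n + 1) → ℕ) (m : ℤ) :
    cnt (n + 1) k m = ∑ t ∈ Finset.range (k 0), cnt n (fun i => k i.succ) (m - t) := by
  classical
  unfold cnt
  rw [Finset.card_eq_sum_card_fiberwise
    (f := fun x : ∀ i, Fin (k i) => x 0) (t := Finset.univ) (fun _ _ => Finset.mem_univ _)]
  rw [Finset.sum_range]
  refine Finset.sum_congr rfl fun t _ => ?_
  refine Finset.card_bij' (fun x _ => Fin.tail x) (fun y _ => Fin.cons t y) ?_ ?_ ?_ ?_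
  · intro x hx
    simp only [Finset.mem_filter, Finset.mem_univ, true_and] at hx ⊢
    obtain ⟨h1, h2⟩ := hx
    subst h2
    rw [← h1, Fin.sum_univ_succ]
    push_cast
    simp only [Fin.tail]
    ring
  · intro y hy
    simp only [Finset.mem_filter, Finset.mem_univ, true_and] at hy ⊢
    refine ⟨?_, by simp⟩
    rw [Fin.sum_univ_succ, Fin.cons_zero]
    simp only [Fin.cons_succ]
    push_cast at hy ⊢
    linarith [hy]
  · intro x hx
    simp only [Finset.mem_filter] at hx
    obtain ⟨-, h2⟩ := hx
    subst h2
    exact Fin.cons_self_tail x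
  · intro y _
    funext i
    simp [Fin.tail]

lemma goodSeq_cnt : ∀ (n : ℕ) (k : Fin n → ℕ), (∀ i, 1 ≤ k i) →
    GoodSeq (∑ j, (k j - 1)) (cnt n k) := by
  intro n
  induction n with
  | zero =>
      intro k _
      have hc : ∀ m : ℤ, cnt 0 k m = if m = 0 then 1 else 0 := by
        intro m
        unfold cnt
        by_cases h : m = 0
        · subst h; simp
        · rw [if_neg h, Finset.card_eq_zero, Finset.filter_eq_empty_iff]
          intro x _
          simpa using fun h' => h h'.symm
      have h0 : (∑ j : Fin 0, (k j - 1)) = 0 := by simp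
      rw [h0]
      refine ⟨?_, ?_, ?_⟩
      · intro i
        rw [hc, hc]
        have : ((0 : ℕ) : ℤ) - i = -i := by omega
        rw [this]
        by_cases h : i = 0 <;> simp [h, neg_eq_zero]
      · intro i j hij hj
        rw [hc, hc]
        split_ifs <;> omega
      · intro i hi
        rw [hc, if_neg (by omega)]
  | succ n ih =>
      intro k hk
      have hgood := ih (fun i => k i.succ) (fun i => hk i.succ)
      have hconv := goodSeq_conv hgood (k 0) (hk 0)
      have hfun : (fun m => ∑ t ∈ Finset.range (k 0),
          cnt n (fun i => k i.succ) (m - t)) = cnt (n + 1) k := by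
        funext m; rw [cnt_rec]
      rw [hfun] at hconv
      have hN : (∑ j : Fin n, (k j.succ - 1)) + (k 0 - 1) = ∑ j, (k j - 1) := by
        rw [Fin.sum_univ_succ]; omega
      rwa [hN] at hconv

/-- In L(k₁,…,kₙ) the rank sizes |L_i| are symmetric (|L_i| = |L_{N-i}| with
N = ∑ (k_j - 1)) and non-decreasing for i ≤ ⌊N/2⌋. -/
theorem rank_sizes_symmetric_unimodal (n : ℕ) (k : Fin n → ℕ) (hk : ∀ i, 1 ≤ k i) :
    (∀ i ≤ ∑ j, (k j - 1),
      (Finset.univ.filter (fun x : ∀ i, Fin (k i) => ∑ j, ((x j : ℕ)) = i)).card =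
      (Finset.univ.filter
        (fun x : ∀ i, Fin (k i) => ∑ j, ((x j : ℕ)) = (∑ j, (k j - 1)) - i)).card) ∧
    (∀ i j, i ≤ j → j ≤ (∑ j, (k j - 1)) / 2 →
      (Finset.univ.filter (fun x : ∀ i, Fin (k i) => ∑ l, ((x l : ℕ)) = i)).card ≤
      (Finset.univ.filter (fun x : ∀ i, Fin (k i) => ∑ l, ((x l : ℕ)) = j)).card) := by
  classical
  obtain ⟨hsym, hmono, _⟩ := goodSeq_cnt n k hk
  set N := ∑ j, (k j - 1) with hN
  have hcnt : ∀ i : ℕ, cnt n k (i : ℤ) =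
      (Finset.univ.filter (fun x : ∀ i, Fin (k i) => ∑ j, ((x j : ℕ)) = i)).card := by
    intro i
    unfold cnt
    congr 1
    apply Finset.filter_congr
    intro x _
    exact_mod_cast Iff.rfl
  constructor
  · intro i hi
    rw [← hcnt i, ← hcnt (N - i)]
    have h : ((N - i : ℕ) : ℤ) = (N : ℤ) - i := by omega
    rw [h]
    exact hsym i
  · intro i j hij hj
    rw [← hcnt i, ← hcnt j]
    exact hmono i j (by exact_mod_cast hij) (by omega)
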